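/- For every integer k ≥ 0, s_k(x) = Σ_{l=0}^{k} (C(k, l)/l!) x^{l}; i.e., the coefficient S_l^{(k)} of x^l in s_k(x) equals C(k, l)/l! for 0 ≤ l ≤ k. -/

import Mathlib

open Polynomial Finset

noncomputable def tt (k : ℕ) : Polynomial ℚ :=
  ∑ l ∈ Finset.range (k + 1), C ((k.choose l : ℚ) / (l.factorial : ℚ)) * X ^ l

lemma coeff_tt (k n : ℕ) : (tt k).coeff n = (k.choose n : ℚ) / (n.factorial : ℚ) := by
  rw [tt, finset_sum_coeff]
  simp only [coeff_C_mul, coeff_X_pow, mul_ite, mul_one, mul_zero]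
  rw [Finset.sum_ite_eq (Finset.range (k+1)) n]
  split_ifs with h
  · rfl
  · have hk : k < n := by
      by_contra hh
      exact h (Finset.mem_range.mpr (by omega))
    simp [Nat.choose_eq_zero_of_lt hk]

lemma key_nat (m r : ℕ) :
    (m+2) * ((m+2).choose (r+1)) + (m+1) * (m.choose (r+1)) =
    (2*m+3) * ((m+1).choose (r+1)) + (r+1) * ((m+1).choose r) := by
  have h1 : (m+2).choose (r+1) = (m+1).choose r + (m+1).choose (r+1) :=
    Nat.choose_succ_succ (m+1) r
  have h2 : (m+1).choose (r+1) = m.choose r + m.choose (r+1) :=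
    Nat.choose_succ_succ m r
  have h3 := Nat.choose_mul_succ_eq m r
  rcases le_or_gt r (m+1) with hle | hlt
  · rw [h1, h2]
    zify [hle] at h3 ⊢
    nlinarith [h3]
  · have hA : (m+1).choose r = 0 := Nat.choose_eq_zero_of_lt hlt
    have hB : m.choose r = 0 := Nat.choose_eq_zero_of_lt (by omega)
    rw [h1, h2, hA, hB]
    ring

theorem s_explicit
    (s : ℕ → Polynomial ℚ)
    (hs0 : s 0 = 1) (hs1 : s 1 = 1 + X)
    (hs : ∀ k : ℕ, 2 ≤ k →
      s k = C (1 / (k : ℚ)) * (C (2 * (k : ℚ) - 1) + X) * s (k - 1)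
              - C (((k : ℚ) - 1) / (k : ℚ)) * s (k - 2)) :
    ∀ k : ℕ,
      s k = ∑ l ∈ Finset.range (k + 1), C ((k.choose l : ℚ) / (l.factorial : ℚ)) * X ^ l := by
  have main : ∀ k : ℕ, s k = tt k := by
    intro k
    induction k using Nat.strong_induction_on with
    | _ k ih =>
      match k with
      | 0 => simp [hs0, tt]
      | 1 =>
        rw [hs1, tt]
        simp [Finset.sum_range_succ]
      | (m+2) =>
        rw [hs (m+2) (by omega)]
        have e1 : m + 2 - 1 = m + 1 := rfl
        have e2 : m + 2 - 2 = m := rfl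
        rw [e1, e2, ih (m+1) (by omega), ih m (by omega)]
        ext n
        have hm2 : ((m:ℚ) + 2) ≠ 0 := by positivity
        rcases n with _ | r
        · simp only [coeff_sub, coeff_C_mul, mul_assoc]
          rw [show (C (2 * ((m+2:ℕ) : ℚ) - 1) + X) * tt (m+1) =
              C (2 * ((m+2:ℕ) : ℚ) - 1) * tt (m+1) + X * tt (m+1) by ring]
          simp only [coeff_add, coeff_C_mul, coeff_tt]
          rw [Polynomial.mul_coeff_zero]
          simp only [coeff_X_zero, zero_mul]
          push_cast
          simp only [Nat.choose_zero_right, Nat.factorial_zero]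
          push_cast
          field_simp
          ring
        · simp only [coeff_sub, coeff_C_mul, mul_assoc]
          rw [show (C (2 * ((m+2:ℕ) : ℚ) - 1) + X) * tt (m+1) =
              C (2 * ((m+2:ℕ) : ℚ) - 1) * tt (m+1) + X * tt (m+1) by ring]
          simp only [coeff_add, coeff_C_mul, coeff_tt, Polynomial.coeff_X_mul]
          have hfr : ((r.factorial : ℚ)) ≠ 0 := by
            exact_mod_cast Nat.factorial_ne_zero r
          have hfr1 : (((r+1).factorial : ℚ)) ≠ 0 := by
            exact_mod_cast Nat.factorial_ne_zero (r+1)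
          have hfact : ((r+1).factorial : ℚ) = (r+1) * r.factorial := by
            rw [Nat.factorial_succ]; push_cast; ring
          have hkey : ((m:ℚ)+2) * ((m+2).choose (r+1) : ℚ) + ((m:ℚ)+1) * (m.choose (r+1) : ℚ) =
              (2*(m:ℚ)+3) * ((m+1).choose (r+1) : ℚ) + ((r:ℚ)+1) * ((m+1).choose r : ℚ) := by
            exact_mod_cast key_nat m r
          push_cast
          rw [hfact]
          field_simp
          linear_combination (-1 : ℚ) * hkey
  intro k
  rw [main k, tt]
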